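/- The free group F_2 on two generators, equipped with the word metric associated with a free basis, has the (1,0)-DTUT property. -/

import Mathlib

open Metric Set Function

namespace APC

variable {X Y : Type*}

/-- A family `𝒰` of subsets of a metric space is `r`-disjoint if any two distinct members
are at distance at least `r`. -/
def RDisjoint [MetricSpace X] (r : ℝ) (𝒰 : Set (Set X)) : Prop :=
  ∀ U ∈ 𝒰, ∀ V ∈ 𝒰, U ≠ V → ∀ x ∈ U, ∀ y ∈ V, r ≤ dist x y

/-- A family `𝒰` is `R`-bounded if every member has diameter at most `R`. -/
def RBounded [MetricSpace X] (R : ℝ) (𝒰 : Set (Set X)) : Prop :=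
  ∀ U ∈ 𝒰, ∀ x ∈ U, ∀ y ∈ U, dist x y ≤ R

/-- A family is uniformly bounded if it is `R`-bounded for some `R > 0`. -/
def UnifBounded [MetricSpace X] (𝒰 : Set (Set X)) : Prop :=
  ∃ R : ℝ, 0 < R ∧ RBounded R 𝒰

/-- `asdim X ≤ n`. -/
def AsdimLE (X : Type*) [MetricSpace X] (n : ℕ) : Prop :=
  ∀ r : ℝ, 0 < r → ∃ 𝒰 : Fin (n + 1) → Set (Set X),
    (∀ i, UnifBounded (𝒰 i)) ∧ (∀ i, RDisjoint r (𝒰 i)) ∧ (⋃ i, ⋃₀ 𝒰 i) = Set.univ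

/-- `X` has finite asymptotic dimension. -/
def HasFiniteAsdim (X : Type*) [MetricSpace X] : Prop := ∃ n : ℕ, AsdimLE X n

/-- Asymptotic property C. -/
def HasAPC (X : Type*) [MetricSpace X] : Prop :=
  ∀ R : ℕ → ℝ, (∀ i, 0 < R i) → StrictMono R →
    ∃ n : ℕ, ∃ 𝒰 : Fin (n + 1) → Set (Set X),
      (∀ i, UnifBounded (𝒰 i)) ∧ (∀ i : Fin (n + 1), RDisjoint (R i) (𝒰 i)) ∧
      (⋃ i, ⋃₀ 𝒰 i) = Set.univ

/-- `M^a`, the derivative of a collection of finite nonempty subsets of `ℕ`. -/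
def deriv (M : Set (Finset ℕ)) (a : ℕ) : Set (Finset ℕ) :=
  {τ | τ.Nonempty ∧ a ∉ τ ∧ insert a τ ∈ M}

/-- `OrdLE α M` means `Ord M ≤ α` in the sense of Radul: either `M = ∅`
(so that `Ord M = 0`), or `Ord M^a < α` for every `a : ℕ`.  Defined by
well-founded recursion on the ordinal `α`. -/
def OrdLE : Ordinal.{0} → Set (Finset ℕ) → Prop :=
  Ordinal.lt_wf.fix (C := fun _ => Set (Finset ℕ) → Prop)
    (fun α IH M => M = ∅ ∨ ∀ a : ℕ, ∃ β : Ordinal.{0}, ∃ hβ : β < α, IH β hβ (deriv M a))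

/-- The collection `A(X,d)` of finite nonempty subsets `σ ⊆ ℕ` such that there is no
covering of `X` by uniformly bounded families `𝒰ᵢ` (`i ∈ σ`), each `i`-disjoint. -/
def AClass (X : Type*) [MetricSpace X] : Set (Finset ℕ) :=
  {σ | σ.Nonempty ∧ ¬ ∃ 𝒰 : ℕ → Set (Set X),
      (∀ i ∈ σ, UnifBounded (𝒰 i)) ∧ (∀ i ∈ σ, RDisjoint (i : ℝ) (𝒰 i)) ∧
      (⋃ i ∈ σ, ⋃₀ 𝒰 i) = Set.univ}

/-- `trasdim X ≤ α`. -/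
def TrasdimLE (X : Type*) [MetricSpace X] (α : Ordinal.{0}) : Prop :=
  OrdLE α (AClass X)

/-- The `(m,n)`-DTUT property: disjointness of the `(m,n)`-tiling through uniform
translation. -/
def DTUT (X : Type*) [MetricSpace X] (m n : ℕ) : Prop :=
  ∃ F : Fin m → ℕ,
    ∀ h : ℕ+ → ℕ+, ∀ k : Fin (m + 1) → ℕ+, StrictMono k →
      ∃ C : (Fin m → ℕ+) → Fin (n + 1) → Set (Set X),
      ∃ D : (Fin m → ℕ+) → (i : Fin m) → Fin (F i + 1) → Set (Set X),
        ∀ l : Fin m → ℕ+, (∀ r : Fin m, l r ≤ h (k r.succ)) →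
          ((∀ j, UnifBounded (C l j)) ∧
           (∀ i s, UnifBounded (D l i s)) ∧
           (∀ j, RDisjoint ((k 0 : ℕ) : ℝ) (C l j)) ∧
           (∀ (i : Fin m) (s : Fin (F i + 1)), RDisjoint ((k i.succ : ℕ) : ℝ) (D l i s)) ∧
           ((⋃ j, ⋃₀ C l j) ∪ (⋃ i, ⋃ s, ⋃₀ D l i s) = Set.univ)) ∧
          (∀ (i : Fin m) (s : Fin (F i + 1)),
            (∀ t : ℕ+, t ≤ h (k i.succ) →
              (⋃₀ D (Function.update l i t) i s).Nonempty) ∧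
            (∀ t t' : ℕ+, t ≤ h (k i.succ) → t' ≤ h (k i.succ) → t ≠ t' →
              Disjoint (⋃₀ D (Function.update l i t) i s)
                (⋃₀ D (Function.update l i t') i s)) ∧
            RDisjoint ((k i.succ : ℕ) : ℝ)
              (⋃ t ∈ {t : ℕ+ | t ≤ h (k i.succ)}, D (Function.update l i t) i s))

/-- The word length of `g` with respect to the symmetrized generating set `S ∪ S⁻¹`. -/
noncomputable def wordLength {G : Type*} [Group G] (S : Set G) (g : G) : ℕ :=
  sInf {n : ℕ | ∃ L : List G, (∀ x ∈ L, x ∈ S ∨ x⁻¹ ∈ S) ∧ L.prod = g ∧ L.length = n}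

/-- A group is FC if every conjugacy class is finite. -/
def IsFCGroup (G : Type*) [Group G] : Prop :=
  ∀ x : G, Set.Finite {y : G | ∃ g : G, g * x * g⁻¹ = y}

/-- A metric on a countable discrete space is proper if every ball is finite. -/
def ProperMet (X : Type*) [MetricSpace X] : Prop :=
  ∀ (x : X) (R : ℝ), (Metric.closedBall x R).Finite

/-- Left invariance of a metric on a group. -/
def LeftInvariant (G : Type*) [Group G] [MetricSpace G] : Prop :=
  ∀ g x y : G, dist (g * x) (g * y) = dist x y

/-- Bornologous maps. -/
def Bornologous [MetricSpace X] [MetricSpace Y] (f : X → Y) : Prop :=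
  ∀ R : ℝ, 0 < R → ∃ P : ℝ, 0 < P ∧ ∀ x y : X, dist x y < R → dist (f x) (f y) < P

/-- Coarse embeddings. -/
def CoarseEmbedding [MetricSpace X] [MetricSpace Y] (f : X → Y) : Prop :=
  ∃ ρminus ρplus : ℝ → ℝ, Monotone ρminus ∧ Monotone ρplus ∧
    Filter.Tendsto ρminus Filter.atTop Filter.atTop ∧
    (∀ x y : X, ρminus (dist x y) ≤ dist (f x) (f y) ∧ dist (f x) (f y) ≤ ρplus (dist x y))

/-- Coarse equivalences: coarse embeddings with coarsely dense image. -/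
def CoarseEquiv [MetricSpace X] [MetricSpace Y] (f : X → Y) : Prop :=
  CoarseEmbedding f ∧ ∃ C : ℝ, 0 < C ∧ ∀ y : Y, ∃ x : X, dist y (f x) ≤ C

end APC

open APC Set


set_option linter.unusedSectionVars false in
section
open FreeGroup
namespace FGD
variable {α : Type*} [DecidableEq α]


lemma reduce_cons_of_eq_cons {a hd : α × Bool} {v tl : List (α × Bool)} (h : reduce v = hd :: tl) :
    reduce (a :: v) = if a.1 = hd.1 ∧ a.2 = !hd.2 then tl else a :: hd :: tl := by
  rw [reduce.cons, h]

lemma reduce_cons_of_eq_nil {a : α × Bool} {v : List (α × Bool)} (h : reduce v = []) :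
    reduce (a :: v) = [a] := by
  rw [reduce.cons, h]

lemma reduced_tail {a : α × Bool} {v : List (α × Bool)} (h : reduce (a :: v) = a :: v) :
    reduce v = v := by
  have hlen : (reduce v).length ≤ v.length := (Red.sublist reduce.red).length_le
  rcases hrv : reduce v with _ | ⟨hd, tl⟩
  · rw [reduce_cons_of_eq_nil hrv] at h
    simp only [List.cons.injEq] at h
    obtain ⟨-, rfl⟩ := h
    rfl
  · rw [reduce_cons_of_eq_cons hrv] at h
    by_cases hc : a.1 = hd.1 ∧ a.2 = !hd.2
    · rw [if_pos hc] at h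
      rw [hrv, h] at hlen
      simp at hlen
    · rw [if_neg hc] at h
      simp only [List.cons.injEq] at h
      exact h.2

lemma reduced_no_cancel_head {a hd : α × Bool} {v tl : List (α × Bool)}
    (h : reduce (a :: v) = a :: v) (hv : v = hd :: tl) : ¬(a.1 = hd.1 ∧ a.2 = !hd.2) := by
  intro hc
  have hred := reduced_tail h
  rw [hv] at hred h
  rw [reduce_cons_of_eq_cons hred, if_pos hc] at h
  have := congrArg List.length h
  simp at this
  omega

lemma reduce_concat (u : List (α × Bool)) (hu : reduce u = u) (l : α × Bool) :
    reduce (u ++ [l]) = u ++ [l] ∨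
      ∃ u', u = u' ++ [(l.1, !l.2)] ∧ reduce (u ++ [l]) = u' := by
  induction u with
  | nil => left; simp [reduce_singleton]
  | cons a v ih =>
    have hv : reduce v = v := reduced_tail hu
    rcases ih hv with hL | ⟨u', hu', hred⟩
    · rcases v with _ | ⟨hd, tl⟩
      · by_cases hc : a.1 = l.1 ∧ a.2 = !l.2
        · right
          refine ⟨[], by simp [Prod.ext_iff, hc.1, hc.2], ?_⟩
          show reduce (a :: [l]) = []
          rw [reduce_cons_of_eq_cons (reduce_singleton l), if_pos hc]
        · left
          show reduce (a :: [l]) = a :: [l]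
          rw [reduce_cons_of_eq_cons (reduce_singleton l), if_neg hc]
      · left
        have hnc := reduced_no_cancel_head hu rfl
        show reduce (a :: (hd :: tl ++ [l])) = a :: (hd :: tl ++ [l])
        rw [reduce_cons_of_eq_cons (show reduce (hd :: tl ++ [l]) = hd :: (tl ++ [l]) from hL),
          if_neg hnc]
        rfl
    · right
      rcases u' with _ | ⟨hd', tl'⟩
      · refine ⟨[a], by simp [hu'], ?_⟩
        show reduce (a :: (v ++ [l])) = [a]
        rw [reduce_cons_of_eq_nil hred]
      · have hnc : ¬(a.1 = hd'.1 ∧ a.2 = !hd'.2) :=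
          reduced_no_cancel_head hu (by simpa using hu')
        refine ⟨a :: hd' :: tl', by simp [hu'], ?_⟩
        show reduce (a :: (v ++ [l])) = a :: hd' :: tl'
        rw [reduce_cons_of_eq_cons hred, if_neg hnc]


lemma norm_le_norm_add (x y : FreeGroup α) : norm y ≤ norm x + norm (x⁻¹ * y) := by
  calc norm y = norm (x * (x⁻¹ * y)) := by rw [mul_inv_cancel_left]
  _ ≤ _ := norm_mul_le _ _

lemma norm_swap (x y : FreeGroup α) : norm (y⁻¹ * x) = norm (x⁻¹ * y) := by
  rw [show y⁻¹ * x = (x⁻¹ * y)⁻¹ by group, norm_inv_eq]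

lemma norm_le_of_take_eq {x y : FreeGroup α} {c : ℕ} (h : x.toWord.take c = y.toWord.take c) :
    norm (x⁻¹ * y) ≤ (norm x - c) + (norm y - c) := by
  have hx : mk (x.toWord.take c) * mk (x.toWord.drop c) = x := by
    rw [mul_mk, List.take_append_drop, mk_toWord]
  have hy : mk (x.toWord.take c) * mk (y.toWord.drop c) = y := by
    rw [h, mul_mk, List.take_append_drop, mk_toWord]
  have key : x⁻¹ * y = (mk (x.toWord.drop c))⁻¹ * mk (y.toWord.drop c) := by
    calc x⁻¹ * y = (mk (x.toWord.take c) * mk (x.toWord.drop c))⁻¹ *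
        (mk (x.toWord.take c) * mk (y.toWord.drop c)) := by rw [hx, hy]
    _ = _ := by group
  have h1 : norm (x⁻¹ * y) ≤ norm ((mk (x.toWord.drop c))⁻¹) + norm (mk (y.toWord.drop c)) := by
    rw [key]; exact norm_mul_le _ _
  have h2 : norm ((mk (x.toWord.drop c))⁻¹) = norm (mk (x.toWord.drop c)) := norm_inv_eq
  have h3 : norm (mk (x.toWord.drop c)) ≤ x.toWord.length - c := by
    have := norm_mk_le (L₁ := x.toWord.drop c)
    simpa [List.length_drop] using this
  have h4 : norm (mk (y.toWord.drop c)) ≤ y.toWord.length - c := by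
    have := norm_mk_le (L₁ := y.toWord.drop c)
    simpa [List.length_drop] using this
  have h5 : norm x = x.toWord.length := rfl
  have h6 : norm y = y.toWord.length := rfl
  omega

lemma exists_change {β : Type*} (f : ℕ → β) (d : ℕ) (h : f 0 ≠ f d) :
    ∃ i, i < d ∧ f i ≠ f (i + 1) := by
  induction d with
  | zero => exact absurd rfl h
  | succ n ih =>
    by_cases hn : f n = f (n + 1)
    · obtain ⟨i, hi, hne⟩ := ih (fun he => h (he.trans hn))
      exact ⟨i, Nat.lt_succ_of_lt hi, hne⟩
    · exact ⟨n, Nat.lt_succ_self n, hn⟩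

lemma prod_map_letters (L : List (α × Bool)) :
    (L.map (fun p => cond p.2 (of p.1) (of p.1)⁻¹)).prod = mk L := by
  induction L with
  | nil => simp only [List.map_nil, List.prod_nil]; exact one_eq_mk
  | cons p L ih =>
    simp only [List.map_cons, List.prod_cons, ih]
    have hp : (cond p.2 (of p.1) (of p.1)⁻¹ : FreeGroup α) = mk [p] := by
      rcases p with ⟨i, b⟩
      cases b
      · show (of i)⁻¹ = mk [(i, false)]
        rw [show (of i : FreeGroup α) = mk [(i, true)] from rfl, inv_mk]
        rfl
      · rfl
    rw [hp, mul_mk]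
    rfl

lemma norm_le_of_letters (L : List (FreeGroup α))
    (h : ∀ g ∈ L, g ∈ Set.range (of : α → FreeGroup α) ∨ g⁻¹ ∈ Set.range of) :
    norm L.prod ≤ L.length := by
  induction L with
  | nil => simp [FreeGroup.norm_one]
  | cons g L ih =>
    have h1 : norm g ≤ 1 := by
      rcases h g (List.mem_cons_self) with ⟨i, hi⟩ | ⟨i, hi⟩
      · rw [← hi, norm_of]
      · rw [← norm_inv_eq, ← hi, norm_of]
    have h2 := ih (fun x hx => h x (List.mem_cons_of_mem _ hx))
    calc norm (g :: L).prod = norm (g * L.prod) := by rw [List.prod_cons]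
    _ ≤ norm g + norm L.prod := norm_mul_le _ _
    _ ≤ (g :: L).length := by simp only [List.length_cons]; omega

lemma wordLength_eq (g : FreeGroup α) :
    APC.wordLength (Set.range (of : α → FreeGroup α)) g = norm g := by
  have hmem : norm g ∈ {n : ℕ | ∃ L : List (FreeGroup α),
      (∀ x ∈ L, x ∈ Set.range (of : α → FreeGroup α) ∨ x⁻¹ ∈ Set.range of) ∧
      L.prod = g ∧ L.length = n} := by
    refine ⟨g.toWord.map (fun p => cond p.2 (of p.1) (of p.1)⁻¹), ?_, ?_, by rw [List.length_map]; rfl⟩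
    · intro x hx
      simp only [List.mem_map] at hx
      obtain ⟨p, -, rfl⟩ := hx
      rcases p with ⟨i, b⟩
      cases b
      · right; simp
      · left; simp
    · rw [prod_map_letters, mk_toWord]
  unfold APC.wordLength
  apply le_antisymm
  · exact Nat.sInf_le hmem
  · apply le_csInf ⟨_, hmem⟩
    rintro n ⟨L, hL, hprod, rfl⟩
    rw [← hprod]
    exact norm_le_of_letters L hL





lemma toWord_mul_letter (x : FreeGroup α) (l : α × Bool) :
    (x * mk [l]).toWord = x.toWord ++ [l] ∨
      ∃ u', x.toWord = u' ++ [(l.1, !l.2)] ∧ (x * mk [l]).toWord = u' := by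
  have h1 : x * mk [l] = mk (x.toWord ++ [l]) := by rw [← mul_mk, mk_toWord]
  rw [h1, toWord_mk]
  exact reduce_concat _ (reduce_toWord x) l

lemma norm_ge_of_take_ne {x y : FreeGroup α} {c : ℕ}
    (h : x.toWord.take (c + 1) ≠ y.toWord.take (c + 1)) :
    (norm x - c) + (norm y - c) ≤ norm (x⁻¹ * y) := by
  set w : List (α × Bool) := (x⁻¹ * y).toWord with hw
  set d : ℕ := w.length with hd
  set z : ℕ → FreeGroup α := fun i => x * mk (w.take i) with hz
  have hz0 : z 0 = x := by
    simp only [hz, List.take_zero]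
    rw [← one_eq_mk, mul_one]
  have hzd : z d = y := by
    simp only [hz, hd, List.take_length]
    rw [hw, mk_toWord, mul_inv_cancel_left]
  have hne : (fun i => (z i).toWord.take (c + 1)) 0 ≠ (fun i => (z i).toWord.take (c + 1)) d := by
    simpa only [hz0, hzd] using h
  obtain ⟨i, hid, hstep⟩ := exists_change (fun i => List.take (c + 1) (z i).toWord) d hne
  have hwi : w.take (i + 1) = w.take i ++ [w[i]] := (List.take_concat_get' w i hid).symm
  have hzi : z (i + 1) = z i * mk [w[i]] := by
    simp only [hz]
    rw [hwi, ← mul_mk, mul_assoc]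
  obtain ⟨j, hjd, hnormj⟩ : ∃ j, j ≤ d ∧ norm (z j) ≤ c := by
    rcases toWord_mul_letter (z i) (w[i]) with hA | ⟨u', hu', hB⟩
    · refine ⟨i, hid.le, ?_⟩
      by_contra hgt
      push_neg at hgt
      apply hstep
      show (z i).toWord.take (c + 1) = (z (i + 1)).toWord.take (c + 1)
      rw [hzi, hA, List.take_append_of_le_length (by exact hgt)]
    · refine ⟨i + 1, by omega, ?_⟩
      by_contra hgt
      push_neg at hgt
      apply hstep
      show (z i).toWord.take (c + 1) = (z (i + 1)).toWord.take (c + 1)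
      have hlen : c + 1 ≤ u'.length := by
        have hh : norm (z (i + 1)) = u'.length := by
          rw [hzi]
          show (z i * mk [w[i]]).toWord.length = u'.length
          rw [hB]
        omega
      rw [hzi, hB, hu', List.take_append_of_le_length hlen]
  have h1 : norm (x⁻¹ * z j) ≤ j := by
    have hxz : x⁻¹ * z j = mk (w.take j) := by
      simp only [hz]
      rw [inv_mul_cancel_left]
    rw [hxz]
    exact le_trans norm_mk_le (by simpa using List.length_take_le j w)
  have h2 : norm ((z j)⁻¹ * y) ≤ d - j := by
    have hyz : (z j)⁻¹ * y = mk (w.drop j) := by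
      have hysplit : y = x * (mk (w.take j) * mk (w.drop j)) := by
        rw [mul_mk, List.take_append_drop, hw, mk_toWord, mul_inv_cancel_left]
      simp only [hz]
      rw [hysplit]
      group
    rw [hyz]
    refine le_trans norm_mk_le ?_
    simp [List.length_drop]
    omega
  have hx1 : norm x ≤ norm (z j) + norm ((z j)⁻¹ * x) := norm_le_norm_add _ _
  have hswap : norm ((z j)⁻¹ * x) = norm (x⁻¹ * z j) := norm_swap _ _
  have hy1 : norm y ≤ norm (z j) + norm ((z j)⁻¹ * y) := norm_le_norm_add _ _
  have hfin : norm (x⁻¹ * y) = d := rfl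
  omega



def inSlab (b P s n : ℕ) : Prop := s - b ≤ n % P ∧ n % P < s
def dbot (b P s n : ℕ) : ℕ := n / P * P + (s - b)
def cbot (b P s n : ℕ) : ℕ := if n % P < s - b then n / P * P + s - P else n / P * P + s

lemma split2 (P n n' : ℕ) (hP : 0 < P) :
    ∃ J J' : ℕ, J = n / P * P ∧ J' = n' / P * P ∧ J + n % P = n ∧ J' + n' % P = n' ∧
      n % P < P ∧ n' % P < P ∧
      (J = J' ∨ (J + P = J' ∨ J + 2 * P ≤ J') ∨ (J' + P = J ∨ J' + 2 * P ≤ J)) := by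
  refine ⟨_, _, rfl, rfl, Nat.div_add_mod' n P, Nat.div_add_mod' n' P,
    Nat.mod_lt _ hP, Nat.mod_lt _ hP, ?_⟩
  rcases Nat.lt_trichotomy (n / P) (n' / P) with h | h | h
  · right; left
    rcases Nat.lt_or_ge (n / P + 1) (n' / P) with h2 | h2
    · right
      calc n / P * P + 2 * P = (n / P + 2) * P := by ring
      _ ≤ n' / P * P := Nat.mul_le_mul_right _ (by omega)
    · left
      have he : n' / P = n / P + 1 := by omega
      rw [he]; ring
  · left; rw [h]
  · right; right
    rcases Nat.lt_or_ge (n' / P + 1) (n / P) with h2 | h2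
    · right
      calc n' / P * P + 2 * P = (n' / P + 2) * P := by ring
      _ ≤ n / P * P := Nat.mul_le_mul_right _ (by omega)
    · left
      have he : n / P = n' / P + 1 := by omega
      rw [he]; ring

lemma dbot_bounds (b P s : ℕ) (hb : 1 ≤ b) (hs : 2 * b ≤ s) (hsP : s ≤ P) {n : ℕ}
    (h : inSlab b P s n) : dbot b P s n ≤ n ∧ n < dbot b P s n + b ∧ b ≤ dbot b P s n := by
  obtain ⟨J, J', hJ, hJ', h1, h2, h3, h4, h5⟩ := split2 P n n (by omega)
  unfold inSlab at h
  unfold dbot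
  rw [← hJ]
  clear hJ hJ' h2 h4 h5
  omega

lemma dbot_ne (b P s : ℕ) (hb : 1 ≤ b) (hs : 2 * b ≤ s) (hsP : s ≤ P) {n n' : ℕ}
    (h : inSlab b P s n) (h' : inSlab b P s n') (hne : dbot b P s n ≠ dbot b P s n') :
    n + b < n' ∨ n' + b < n := by
  obtain ⟨J, J', hJ, hJ', h1, h2, h3, h4, h5⟩ := split2 P n n' (by omega)
  unfold inSlab at h h'
  unfold dbot at hne
  rw [← hJ, ← hJ'] at hne
  clear hJ hJ'
  omega

lemma slab_slab_ne (b P s s' : ℕ) (hb : 1 ≤ b) (hs : 2 * b ≤ s) (hss' : s + 2 * b ≤ s')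
    (hs'P : s' ≤ P) {n n' : ℕ} (h : inSlab b P s n) (h' : inSlab b P s' n') :
    n + b < n' ∨ n' + b < n := by
  obtain ⟨J, J', hJ, hJ', h1, h2, h3, h4, h5⟩ := split2 P n n' (by omega)
  unfold inSlab at h h'
  clear hJ hJ'
  omega

lemma slab_disjoint (b P s s' : ℕ) (hb : 1 ≤ b) (hs : 2 * b ≤ s) (hss' : s + 2 * b ≤ s')
    (hs'P : s' ≤ P) {n : ℕ} (h : inSlab b P s n) (h' : inSlab b P s' n) : False := by
  unfold inSlab at h h'
  omega

lemma cbot_bounds (b P s : ℕ) (hb : 1 ≤ b) (hs : 2 * b ≤ s) (hsP : s ≤ P) {n : ℕ}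
    (h : ¬ inSlab b P s n) : cbot b P s n ≤ n ∧ n + b + 1 ≤ cbot b P s n + P := by
  obtain ⟨J, J', hJ, hJ', h1, h2, h3, h4, h5⟩ := split2 P n n (by omega)
  unfold inSlab at h
  unfold cbot
  rw [← hJ]
  clear hJ hJ' h2 h4 h5
  split_ifs <;> omega

lemma cbot_ne (b P s : ℕ) (hb : 1 ≤ b) (hs : 2 * b ≤ s) (hsP : s ≤ P) {n n' : ℕ}
    (hn : ¬ inSlab b P s n) (hn' : ¬ inSlab b P s n') (hne : cbot b P s n ≠ cbot b P s n') :
    n + b < n' ∨ n' + b < n := by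
  obtain ⟨J, J', hJ, hJ', h1, h2, h3, h4, h5⟩ := split2 P n n' (by omega)
  unfold inSlab at hn hn'
  unfold cbot at hne
  rw [← hJ, ← hJ'] at hne
  clear hJ hJ'
  split_ifs at hne <;> omega

lemma slab_mem (b P s : ℕ) (hb : 1 ≤ b) (hs : 2 * b ≤ s) (hsP : s ≤ P) :
    inSlab b P s (s - b) := by
  unfold inSlab
  have : (s - b) % P = s - b := Nat.mod_eq_of_lt (by omega)
  omega




def nw (x : FreeGroup (Fin 2)) : ℕ := FreeGroup.norm x

def dpiece (b P s : ℕ) (x : FreeGroup (Fin 2)) : Set (FreeGroup (Fin 2)) :=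
  {y | inSlab b P s (nw y) ∧ dbot b P s (nw y) = dbot b P s (nw x) ∧
    y.toWord.take (dbot b P s (nw x) - b) = x.toWord.take (dbot b P s (nw x) - b)}

def dfam (b P s : ℕ) : Set (Set (FreeGroup (Fin 2))) :=
  {S | ∃ x, inSlab b P s (nw x) ∧ S = dpiece b P s x}

def cpiece (a b P s : ℕ) (x : FreeGroup (Fin 2)) : Set (FreeGroup (Fin 2)) :=
  {y | ¬ inSlab b P s (nw y) ∧ cbot b P s (nw y) = cbot b P s (nw x) ∧
    y.toWord.take (cbot b P s (nw x) - a) = x.toWord.take (cbot b P s (nw x) - a)}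

def cfam (a b P s : ℕ) : Set (Set (FreeGroup (Fin 2))) :=
  {S | ∃ x, ¬ inSlab b P s (nw x) ∧ S = cpiece a b P s x}


lemma mem_dpiece_self {b P s : ℕ} {x : FreeGroup (Fin 2)} (hx : inSlab b P s (nw x)) :
    x ∈ dpiece b P s x := ⟨hx, rfl, rfl⟩

lemma mem_cpiece_self {a b P s : ℕ} {x : FreeGroup (Fin 2)} (hx : ¬ inSlab b P s (nw x)) :
    x ∈ cpiece a b P s x := ⟨hx, rfl, rfl⟩

lemma norm_separation {u v : FreeGroup (Fin 2)} {b : ℕ}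
    (h : nw u + b < nw v ∨ nw v + b < nw u) : b ≤ norm (u⁻¹ * v) := by
  have h1 := norm_le_norm_add u v
  have h2 := norm_le_norm_add v u
  rw [norm_swap] at h2
  unfold nw at h
  omega

lemma dpiece_diam (b P s : ℕ) (hb : 1 ≤ b) (hs : 2 * b ≤ s) (hsP : s ≤ P)
    {x u v : FreeGroup (Fin 2)} (hu : u ∈ dpiece b P s x) (hv : v ∈ dpiece b P s x) :
    norm (u⁻¹ * v) ≤ 4 * b := by
  obtain ⟨hus, huB, huT⟩ := hu
  obtain ⟨hvs, hvB, hvT⟩ := hv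
  have hT : u.toWord.take (dbot b P s (nw x) - b) = v.toWord.take (dbot b P s (nw x) - b) :=
    huT.trans hvT.symm
  have h1 := norm_le_of_take_eq hT
  have h2 := dbot_bounds b P s hb hs hsP hus
  have h3 := dbot_bounds b P s hb hs hsP hvs
  rw [huB] at h2
  rw [hvB] at h3
  unfold nw at *
  omega

lemma dpiece_sep (b P s : ℕ) (hb : 1 ≤ b) (hs : 2 * b ≤ s) (hsP : s ≤ P)
    {x y u v : FreeGroup (Fin 2)} (hne : dpiece b P s x ≠ dpiece b P s y)
    (hu : u ∈ dpiece b P s x) (hv : v ∈ dpiece b P s y) : b ≤ norm (u⁻¹ * v) := by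
  obtain ⟨hus, huB, huT⟩ := hu
  obtain ⟨hvs, hvB, hvT⟩ := hv
  by_cases hB : dbot b P s (nw x) = dbot b P s (nw y)
  · by_cases hT : x.toWord.take (dbot b P s (nw x) - b) = y.toWord.take (dbot b P s (nw x) - b)
    · exfalso
      apply hne
      unfold dpiece
      rw [← hB, ← hT]
    · -- prefixes differ
      have hpos : 1 ≤ dbot b P s (nw x) - b := by
        rcases Nat.eq_zero_or_pos (dbot b P s (nw x) - b) with h0 | h0
        · exact absurd (by rw [h0]; simp) hT
        · exact h0
      set c : ℕ := dbot b P s (nw x) - b - 1 with hc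
      have hc1 : dbot b P s (nw x) - b = c + 1 := by omega
      have hTuv : u.toWord.take (c + 1) ≠ v.toWord.take (c + 1) := by
        rw [← hc1]
        rw [← hB] at hvT
        intro hcontra
        exact hT ((huT.symm.trans hcontra).trans hvT)
      have h1 := norm_ge_of_take_ne hTuv
      have h2 := dbot_bounds b P s hb hs hsP hus
      have h3 := dbot_bounds b P s hb hs hsP hvs
      rw [huB] at h2
      rw [hvB, ← hB] at h3
      unfold nw at *
      omega
  · have h2 := (dbot_bounds b P s hb hs hsP hus).1
    have h3 := (dbot_bounds b P s hb hs hsP hvs).1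
    apply norm_separation
    refine dbot_ne b P s hb hs hsP hus hvs ?_
    rw [huB, hvB]
    exact hB

lemma dpiece_cross (b P s s' : ℕ) (hb : 1 ≤ b) (hs : 2 * b ≤ s) (hss' : s + 2 * b ≤ s')
    (hs'P : s' ≤ P) {x y u v : FreeGroup (Fin 2)}
    (hu : u ∈ dpiece b P s x) (hv : v ∈ dpiece b P s' y) : b ≤ norm (u⁻¹ * v) := by
  exact norm_separation (slab_slab_ne b P s s' hb hs hss' hs'P hu.1 hv.1)

lemma cpiece_diam (a b P s : ℕ) (hb : 1 ≤ b) (hs : 2 * b ≤ s) (hsP : s ≤ P)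
    {x u v : FreeGroup (Fin 2)} (hu : u ∈ cpiece a b P s x) (hv : v ∈ cpiece a b P s x) :
    norm (u⁻¹ * v) ≤ 2 * (P + a) := by
  obtain ⟨hus, huB, huT⟩ := hu
  obtain ⟨hvs, hvB, hvT⟩ := hv
  have hT : u.toWord.take (cbot b P s (nw x) - a) = v.toWord.take (cbot b P s (nw x) - a) :=
    huT.trans hvT.symm
  have h1 := norm_le_of_take_eq hT
  have h2 := cbot_bounds b P s hb hs hsP hus
  have h3 := cbot_bounds b P s hb hs hsP hvs
  rw [huB] at h2
  rw [hvB] at h3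
  unfold nw at *
  omega

lemma cpiece_sep (a b P s : ℕ) (hb : 1 ≤ b) (hab : a ≤ b) (hs : 2 * b ≤ s) (hsP : s ≤ P)
    {x y u v : FreeGroup (Fin 2)} (hne : cpiece a b P s x ≠ cpiece a b P s y)
    (hu : u ∈ cpiece a b P s x) (hv : v ∈ cpiece a b P s y) : a ≤ norm (u⁻¹ * v) := by
  obtain ⟨hus, huB, huT⟩ := hu
  obtain ⟨hvs, hvB, hvT⟩ := hv
  by_cases hB : cbot b P s (nw x) = cbot b P s (nw y)
  · by_cases hT : x.toWord.take (cbot b P s (nw x) - a) = y.toWord.take (cbot b P s (nw x) - a)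
    · exfalso
      apply hne
      unfold cpiece
      rw [← hB, ← hT]
    · have hpos : 1 ≤ cbot b P s (nw x) - a := by
        rcases Nat.eq_zero_or_pos (cbot b P s (nw x) - a) with h0 | h0
        · exact absurd (by rw [h0]; simp) hT
        · exact h0
      set c : ℕ := cbot b P s (nw x) - a - 1 with hc
      have hc1 : cbot b P s (nw x) - a = c + 1 := by omega
      have hTuv : u.toWord.take (c + 1) ≠ v.toWord.take (c + 1) := by
        rw [← hc1]
        rw [← hB] at hvT
        intro hcontra
        exact hT ((huT.symm.trans hcontra).trans hvT)
      have h1 := norm_ge_of_take_ne hTuv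
      have h2 := cbot_bounds b P s hb hs hsP hus
      have h3 := cbot_bounds b P s hb hs hsP hvs
      rw [huB] at h2
      rw [hvB, ← hB] at h3
      unfold nw at *
      omega
  · have hsep : nw u + b < nw v ∨ nw v + b < nw u := by
      refine cbot_ne b P s hb hs hsP hus hvs ?_
      rw [huB, hvB]
      exact hB
    have := norm_separation hsep
    omega


end FGD
end

/-- The free group on two generators, with the word metric of a free
basis, has the `(1,0)`-DTUT property. -/
theorem freeGroup_dtut [MetricSpace (FreeGroup (Fin 2))]
    (hword : ∀ x y : FreeGroup (Fin 2),
      dist x y = (wordLength (Set.range (FreeGroup.of : Fin 2 → FreeGroup (Fin 2)))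
        (x⁻¹ * y) : ℝ)) :
    DTUT (FreeGroup (Fin 2)) 1 0 := by
  classical
  have hdist : ∀ x y : FreeGroup (Fin 2), dist x y = (FreeGroup.norm (x⁻¹ * y) : ℝ) := by
    intro x y
    rw [hword, FGD.wordLength_eq]
  refine ⟨fun _ => 0, ?_⟩
  intro h k hk
  set a : ℕ := (k 0 : ℕ) with ha
  set b : ℕ := (k 1 : ℕ) with hbdef
  set H : ℕ := (h (k 1) : ℕ) with hHdef
  set P : ℕ := 2 * b * H with hPdef
  have hab : a < b := by
    have h01 : k 0 < k 1 := hk (by decide)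
    exact_mod_cast h01
  have hb1 : 1 ≤ b := (k 1).property
  have hH1 : 1 ≤ H := (h (k 1)).property
  have hs_lb : ∀ m : ℕ, 1 ≤ m → 2 * b ≤ 2 * m * b := by intro m hm; nlinarith
  have hs_ub : ∀ m : ℕ, m ≤ H → 2 * m * b ≤ P := by intro m hm; rw [hPdef]; nlinarith
  have hs_step : ∀ m m' : ℕ, m < m' → 2 * m * b + 2 * b ≤ 2 * m' * b := by
    intro m m' hmm; nlinarith
  set sv : (Fin 1 → ℕ+) → ℕ := fun l => 2 * (min ((l 0 : ℕ+) : ℕ) H) * b with hsvdef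
  have hsv1 : ∀ l, 2 * b ≤ sv l := fun l => hs_lb _ (le_min (l 0).property hH1)
  have hsv2 : ∀ l, sv l ≤ P := fun l => hs_ub _ (min_le_right _ _)
  have hsucc : ((0 : Fin 1)).succ = (1 : Fin 2) := rfl
  refine ⟨fun l _ => FGD.cfam a b P (sv l), fun l _ _ => FGD.dfam b P (sv l), ?_⟩
  intro l _
  have hsv_up : ∀ t : ℕ+, t ≤ h (k 1) → sv (Function.update l 0 t) = 2 * (t : ℕ) * b := by
    intro t ht
    show 2 * (min ((Function.update l 0 t 0 : ℕ+) : ℕ) H) * b = _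
    rw [Function.update_self]
    have : min ((t : ℕ+) : ℕ) H = (t : ℕ) := min_eq_left (by exact_mod_cast ht)
    rw [this]
  constructor
  · refine ⟨?_, ?_, ?_, ?_, ?_⟩
    · -- UnifBounded C
      intro j
      refine ⟨((2 * (P + a) + 1 : ℕ) : ℝ), by exact_mod_cast Nat.succ_pos _, ?_⟩
      rintro U ⟨x, hx, rfl⟩ u hu v hv
      rw [hdist]
      exact_mod_cast le_trans
        (FGD.cpiece_diam a b P (sv l) hb1 (hsv1 l) (hsv2 l) hu hv) (by omega)
    · -- UnifBounded D
      intro i s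
      refine ⟨((4 * b + 1 : ℕ) : ℝ), by exact_mod_cast Nat.succ_pos _, ?_⟩
      rintro U ⟨x, hx, rfl⟩ u hu v hv
      rw [hdist]
      exact_mod_cast le_trans
        (FGD.dpiece_diam b P (sv l) hb1 (hsv1 l) (hsv2 l) hu hv) (by omega)
    · -- RDisjoint a C
      intro j
      rintro U ⟨x, hx, rfl⟩ V ⟨y, hy, rfl⟩ hne u hu v hv
      rw [hdist]
      exact_mod_cast FGD.cpiece_sep a b P (sv l) hb1 hab.le (hsv1 l) (hsv2 l) hne hu hv
    · -- RDisjoint b D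
      intro i s
      have hi : i = 0 := Subsingleton.elim i 0
      subst hi
      rintro U ⟨x, hx, rfl⟩ V ⟨y, hy, rfl⟩ hne u hu v hv
      rw [hdist]
      show ((k ((0 : Fin 1)).succ : ℕ) : ℝ) ≤ _
      rw [hsucc]
      exact_mod_cast FGD.dpiece_sep b P (sv l) hb1 (hsv1 l) (hsv2 l) hne hu hv
    · -- cover
      ext x
      simp only [Set.mem_union, Set.mem_iUnion, Set.mem_sUnion, Set.mem_univ, iff_true]
      by_cases hx : FGD.inSlab b P (sv l) (FGD.nw x)
      · right
        exact ⟨0, 0, FGD.dpiece b P (sv l) x, ⟨x, hx, rfl⟩, FGD.mem_dpiece_self hx⟩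
      · left
        exact ⟨0, FGD.cpiece a b P (sv l) x, ⟨x, hx, rfl⟩, FGD.mem_cpiece_self hx⟩
  · intro i s
    have hi : i = 0 := Subsingleton.elim i 0
    subst hi
    rw [hsucc]
    refine ⟨?_, ?_, ?_⟩
    · -- nonempty
      intro t ht
      show (⋃₀ FGD.dfam b P (sv (Function.update l 0 t))).Nonempty
      rw [hsv_up t ht]
      have ht1 : 1 ≤ (t : ℕ) := t.property
      have htH : (t : ℕ) ≤ H := by exact_mod_cast ht
      obtain ⟨x, hxn⟩ : ∃ x : FreeGroup (Fin 2), FreeGroup.norm x = 2 * (t : ℕ) * b - b :=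
        ⟨FreeGroup.of 0 ^ (2 * (t : ℕ) * b - b), FreeGroup.norm_of_pow 0 _⟩
      have hslab : FGD.inSlab b P (2 * (t : ℕ) * b) (FGD.nw x) := by
        show FGD.inSlab b P (2 * (t : ℕ) * b) (FreeGroup.norm x)
        rw [hxn]
        exact FGD.slab_mem b P _ hb1 (hs_lb _ ht1) (hs_ub _ htH)
      exact ⟨x, FGD.dpiece b P (2 * (t : ℕ) * b) x, ⟨x, hslab, rfl⟩,
        FGD.mem_dpiece_self hslab⟩
    · -- disjoint
      intro t t' ht ht' htt'
      show Disjoint (⋃₀ FGD.dfam b P (sv (Function.update l 0 t)))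
        (⋃₀ FGD.dfam b P (sv (Function.update l 0 t')))
      rw [hsv_up t ht, hsv_up t' ht']
      rw [Set.disjoint_left]
      rintro z ⟨U, ⟨x, hx, rfl⟩, hzU⟩ ⟨V, ⟨y, hy, rfl⟩, hzV⟩
      have h1 := hzU.1
      have h2 := hzV.1
      have hnat : (t : ℕ) ≠ (t' : ℕ) := fun hh => htt' (by exact_mod_cast hh)
      have htH : (t : ℕ) ≤ H := by exact_mod_cast ht
      have ht'H : (t' : ℕ) ≤ H := by exact_mod_cast ht'
      rcases Nat.lt_or_ge (t : ℕ) (t' : ℕ) with hlt | hge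
      · exact FGD.slab_disjoint b P _ _ hb1 (hs_lb _ t.property)
          (hs_step _ _ hlt) (hs_ub _ ht'H) h1 h2
      · have hlt : (t' : ℕ) < (t : ℕ) := lt_of_le_of_ne hge (Ne.symm hnat)
        exact FGD.slab_disjoint b P _ _ hb1 (hs_lb _ t'.property)
          (hs_step _ _ hlt) (hs_ub _ htH) h2 h1
    · -- RDisjoint of union over translates
      rintro U hU V hV hne u hu v hv
      rw [hdist]
      simp only [Set.mem_iUnion, Set.mem_setOf_eq, exists_prop] at hU hV
      obtain ⟨t, ht, hUt⟩ := hU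
      obtain ⟨t', ht', hVt⟩ := hV
      rw [hsv_up t ht] at hUt
      rw [hsv_up t' ht'] at hVt
      obtain ⟨x, hx, rfl⟩ := hUt
      obtain ⟨y, hy, rfl⟩ := hVt
      have htH : (t : ℕ) ≤ H := by exact_mod_cast ht
      have ht'H : (t' : ℕ) ≤ H := by exact_mod_cast ht'
      rcases Nat.lt_trichotomy (t : ℕ) (t' : ℕ) with hlt | heq | hgt
      · exact_mod_cast FGD.dpiece_cross b P _ _ hb1 (hs_lb _ t.property)
          (hs_step _ _ hlt) (hs_ub _ ht'H) hu hv
      · have hss : 2 * ((t : ℕ)) * b = 2 * ((t' : ℕ)) * b := by rw [heq]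
        rw [hss] at hne hu hx
        exact_mod_cast FGD.dpiece_sep b P _ hb1 (hs_lb _ t'.property)
          (hs_ub _ ht'H) hne hu hv
      · have hb' := FGD.dpiece_cross b P _ _ hb1 (hs_lb _ t'.property)
          (hs_step _ _ hgt) (hs_ub _ htH) hv hu
        rw [FGD.norm_swap] at hb'
        exact_mod_cast hb'
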